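/- Let ω be a non-negative integrable function on the interval (a,b) with ∫_a^b ω(y) dy = 1 and with y^k ω(y) integrable on (a,b) for every k ≥ 0, and let L_ω[f] = ∫_a^b f(y) ω(y) dy. Let (𝔭_k)_{k≥0} be a sequence of real polynomials with deg 𝔭_k = k orthogonal with respect to L_ω (L_ω[𝔭_j 𝔭_k] = 0 for j ≠ k, L_ω[𝔭_k^2] ≠ 0), let ζ ∉ (a,b) satisfy 𝔭_k(ζ) ≠ 0 for all k, and define the kernel polynomials K_n(x;ζ) = Σ_{k=0}^{n} (𝔭_k(ζ)/L_ω[𝔭_k^2]) 𝔭_k(x). Suppose (P_n)_{n≥0} is a sequence of real polynomials with deg P_n = n that is orthogonal with respect to L_{(y−ζ)ω}[f] = ∫_a^b f(y)(y−ζ)ω(y) dy and satisfies, for given real τ, σ and every n, the nonlinear integral equation ∫_a^b P_n(y) P_n((y−ζ)(τ+σx) + x) ω(y) dy = P_n(x) for all real x. Then P_n(x) = K_n(x;ζ) for all n. -/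

import Mathlib

open MeasureTheory Set Polynomial

private noncomputable def LI (a b : ℝ) (ω : ℝ → ℝ) (q : Polynomial ℝ) : ℝ :=
  ∫ y in Ioo a b, q.eval y * ω y

private lemma LI_integrable (a b : ℝ) (ω : ℝ → ℝ)
    (h : ∀ k : ℕ, IntegrableOn (fun y => y ^ k * ω y) (Ioo a b)) (q : Polynomial ℝ) :
    IntegrableOn (fun y => q.eval y * ω y) (Ioo a b) := by
  induction q using Polynomial.induction_on' with
  | add r s hr hs =>
      have h1 : (fun y => (r + s).eval y * ω y)
          = fun y => r.eval y * ω y + s.eval y * ω y := by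
        funext y; rw [eval_add]; ring
      rw [h1]; exact hr.add hs
  | monomial k ck =>
      have h1 : (fun y => ((monomial k ck).eval y) * ω y)
          = fun y => ck * (y ^ k * ω y) := by
        funext y; rw [eval_monomial]; ring
      rw [h1]; exact (h k).const_mul ck

private lemma LI_sum (a b : ℝ) (ω : ℝ → ℝ)
    (h : ∀ k : ℕ, IntegrableOn (fun y => y ^ k * ω y) (Ioo a b))
    (s : Finset ℕ) (f : ℕ → Polynomial ℝ) :
    LI a b ω (∑ i ∈ s, f i) = ∑ i ∈ s, LI a b ω (f i) := by
  unfold LI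
  rw [← integral_finset_sum _ (fun i _ => LI_integrable a b ω h (f i))]
  apply integral_congr_ae
  filter_upwards with y
  rw [eval_finset_sum, Finset.sum_mul]

private lemma LI_C (a b : ℝ) (ω : ℝ → ℝ) (c : ℝ) (q : Polynomial ℝ) :
    LI a b ω (Polynomial.C c * q) = c * LI a b ω q := by
  unfold LI
  rw [← integral_const_mul]
  apply integral_congr_ae
  filter_upwards with y
  rw [eval_mul, eval_C]; ring

private lemma span_lemma (Q : ℕ → Polynomial ℝ) (hdeg : ∀ k, (Q k).natDegree = k)
    (hne : ∀ k, Q k ≠ 0) :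
    ∀ (n : ℕ) (q : Polynomial ℝ), q.natDegree ≤ n →
      ∃ c : ℕ → ℝ, q = ∑ m ∈ Finset.range (n + 1), Polynomial.C (c m) * Q m := by
  have hlc : ∀ k, (Q k).coeff k ≠ 0 := by
    intro k
    have := hdeg k
    have h2 := leadingCoeff_ne_zero.mpr (hne k)
    rwa [Polynomial.leadingCoeff, hdeg k] at h2
  intro n
  induction n with
  | zero =>
      intro q hq
      refine ⟨fun _ => q.coeff 0 / (Q 0).coeff 0, ?_⟩
      have hq0 : q = C (q.coeff 0) := (Polynomial.eq_C_of_natDegree_le_zero hq)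
      have hQ0 : Q 0 = C ((Q 0).coeff 0) :=
        Polynomial.eq_C_of_natDegree_le_zero (le_of_eq (hdeg 0))
      rw [Finset.sum_range_one]
      nth_rewrite 2 [hQ0]
      rw [← map_mul, div_mul_cancel₀ _ (hlc 0)]
      exact hq0
  | succ n ih =>
      intro q hq
      set t := q.coeff (n + 1) / (Q (n + 1)).coeff (n + 1) with ht
      set r := q - C t * Q (n + 1) with hr
      have hrd : r.natDegree ≤ n := by
        rw [Polynomial.natDegree_le_iff_coeff_eq_zero]
        intro N hN
        rw [hr, Polynomial.coeff_sub, Polynomial.coeff_C_mul]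
        rcases eq_or_lt_of_le (Nat.succ_le_of_lt hN) with hN1 | hN1
        · rw [← hN1, ht, div_mul_cancel₀ _ (hlc (n + 1)), sub_self]
        · rw [Polynomial.coeff_eq_zero_of_natDegree_lt (lt_of_le_of_lt hq hN1),
            Polynomial.coeff_eq_zero_of_natDegree_lt (by rw [hdeg]; exact hN1),
            mul_zero, sub_self]
      obtain ⟨c, hc⟩ := ih r hrd
      refine ⟨Function.update c (n + 1) t, ?_⟩
      rw [Finset.sum_range_succ]
      simp only [Function.update_self]
      have hsum : ∑ m ∈ Finset.range (n + 1),
          C (Function.update c (n + 1) t m) * Q m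
          = ∑ m ∈ Finset.range (n + 1), C (c m) * Q m := by
        apply Finset.sum_congr rfl
        intro m hm
        rw [Function.update_of_ne (by have := Finset.mem_range.mp hm; omega)]
      rw [hsum, ← hc, hr]
      ring

private noncomputable def Kp (a b : ℝ) (ω : ℝ → ℝ) (ζ : ℝ) (p : ℕ → Polynomial ℝ)
    (n : ℕ) : Polynomial ℝ :=
  ∑ k ∈ Finset.range (n + 1),
    Polynomial.C ((p k).eval ζ / LI a b ω (p k ^ 2)) * p k

private lemma rep_lemma (a b : ℝ) (ω : ℝ → ℝ)
    (h_moments : ∀ k : ℕ, IntegrableOn (fun y => y ^ k * ω y) (Ioo a b))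
    (p : ℕ → Polynomial ℝ) (hpdeg : ∀ k, (p k).natDegree = k)
    (hp0 : ∀ k, p k ≠ 0)
    (horth : ∀ j k, j ≠ k → LI a b ω (p j * p k) = 0)
    (hdne : ∀ k, LI a b ω (p k ^ 2) ≠ 0)
    (ζ : ℝ) (n : ℕ) (q : Polynomial ℝ) (hq : q.natDegree ≤ n) :
    LI a b ω (Kp a b ω ζ p n * q) = q.eval ζ := by
  obtain ⟨c, hc⟩ := span_lemma p hpdeg hp0 n q hq
  have expand : Kp a b ω ζ p n * q
      = ∑ k ∈ Finset.range (n + 1), ∑ j ∈ Finset.range (n + 1),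
          (Polynomial.C ((p k).eval ζ / LI a b ω (p k ^ 2)) * p k)
            * (Polynomial.C (c j) * p j) := by
    unfold Kp
    rw [hc]
    exact Finset.sum_mul_sum _ _ _ _
  rw [expand, LI_sum a b ω h_moments]
  have step1 : ∀ k ∈ Finset.range (n + 1),
      LI a b ω (∑ j ∈ Finset.range (n + 1),
          (Polynomial.C ((p k).eval ζ / LI a b ω (p k ^ 2)) * p k)
            * (Polynomial.C (c j) * p j))
        = c k * (p k).eval ζ := by
    intro k hk
    rw [LI_sum a b ω h_moments]
    rw [Finset.sum_eq_single k]
    · have ht : (Polynomial.C ((p k).eval ζ / LI a b ω (p k ^ 2)) * p k)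
          * (Polynomial.C (c k) * p k)
          = Polynomial.C ((p k).eval ζ / LI a b ω (p k ^ 2))
              * (Polynomial.C (c k) * p k ^ 2) := by ring
      rw [ht, LI_C, LI_C]
      rw [div_mul_eq_mul_div, mul_div_assoc, mul_div_cancel_right₀ _ (hdne k), mul_comm]
    · intro j hj hjk
      have ht : (Polynomial.C ((p k).eval ζ / LI a b ω (p k ^ 2)) * p k)
          * (Polynomial.C (c j) * p j)
          = Polynomial.C ((p k).eval ζ / LI a b ω (p k ^ 2))
              * (Polynomial.C (c j) * (p k * p j)) := by ring
      rw [ht, LI_C, LI_C, horth k j (Ne.symm hjk), mul_zero, mul_zero]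
    · intro hk'
      exact absurd hk hk'
  rw [Finset.sum_congr rfl step1]
  have : q.eval ζ = ∑ k ∈ Finset.range (n + 1), c k * (p k).eval ζ := by
    rw [hc, eval_finset_sum]
    apply Finset.sum_congr rfl
    intro k _
    rw [eval_mul, eval_C]
  rw [this]

/-- **Corollary** (uniqueness half) of Dominici, "Polynomial solutions of nonlinear integral
equations": the only orthogonal polynomial sequence (with respect to `L_{(y-ζ)ω}`) solving
the nonlinear integral equation `∫ Pₙ(y) Pₙ((y-ζ)(τ+σx)+x) ω(y) dy = Pₙ(x)` is the sequence
of kernel polynomials `Kₙ(x;ζ) = Σ_{k=0}^n (𝔭ₖ(ζ)/L_ω[𝔭ₖ²]) 𝔭ₖ(x)`. -/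
theorem OPS_solution_is_kernel_polynomials (a b : ℝ) (ω : ℝ → ℝ)
    (hω_nonneg : ∀ y ∈ Ioo a b, 0 ≤ ω y)
    (hω_int : IntegrableOn ω (Ioo a b))
    (hω_norm : (∫ y in Ioo a b, ω y) = 1)
    (h_moments : ∀ k : ℕ, IntegrableOn (fun y => y ^ k * ω y) (Ioo a b))
    -- the orthogonal polynomials 𝔭ₖ for L_ω
    (p : ℕ → Polynomial ℝ)
    (hpdeg : ∀ k, (p k).natDegree = k)
    (hporth : ∀ j k, j ≠ k →
      (∫ y in Ioo a b, (p j).eval y * (p k).eval y * ω y) = 0)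
    (hpne : ∀ k, (∫ y in Ioo a b, ((p k).eval y) ^ 2 * ω y) ≠ 0)
    (ζ : ℝ) (hζ : ζ ∉ Ioo a b)
    (hpζ : ∀ k, (p k).eval ζ ≠ 0)
    -- the kernel polynomials Kₙ(x;ζ)
    (K : ℕ → ℝ → ℝ)
    (hK : ∀ n x, K n x = ∑ k ∈ Finset.range (n + 1),
      ((p k).eval ζ / (∫ y in Ioo a b, ((p k).eval y) ^ 2 * ω y)) * (p k).eval x)
    -- the sequence (Pₙ): an OPS for L_{(y-ζ)ω} solving the integral equation
    (P : ℕ → Polynomial ℝ)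
    (hPdeg : ∀ n, (P n).natDegree = n)
    (hPorth : ∀ n m, n ≠ m →
      (∫ y in Ioo a b, (P n).eval y * (P m).eval y * (y - ζ) * ω y) = 0)
    (hPne : ∀ n, (∫ y in Ioo a b, ((P n).eval y) ^ 2 * (y - ζ) * ω y) ≠ 0)
    (τ σ : ℝ)
    (heq : ∀ (n : ℕ) (x : ℝ),
      (∫ y in Ioo a b, (P n).eval y * (P n).eval ((y - ζ) * (τ + σ * x) + x) * ω y)
        = (P n).eval x) :
    ∀ (n : ℕ) (x : ℝ), (P n).eval x = K n x := by
  intro n x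
  have hp0 : ∀ k, p k ≠ 0 := fun k h => hpne k (by simp [h])
  have hP0 : ∀ k, P k ≠ 0 := fun k h => hPne k (by simp [h])
  have horth : ∀ j k, j ≠ k → LI a b ω (p j * p k) = 0 := by
    intro j k hjk
    have h1 := hporth j k hjk
    unfold LI
    simpa only [eval_mul] using h1
  have hdne : ∀ k, LI a b ω (p k ^ 2) ≠ 0 := by
    intro k
    have h1 := hpne k
    unfold LI
    simpa only [eval_pow] using h1
  have hPorth' : ∀ j k, j ≠ k → LI a b ω (P j * P k * (X - Polynomial.C ζ)) = 0 := by
    intro j k hjk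
    have h1 := hPorth j k hjk
    unfold LI
    simpa only [eval_mul, eval_sub, eval_X, eval_C] using h1
  have hPne' : ∀ k, LI a b ω (P k ^ 2 * (X - Polynomial.C ζ)) ≠ 0 := by
    intro k
    have h1 := hPne k
    unfold LI
    simpa only [eval_mul, eval_pow, eval_sub, eval_X, eval_C] using h1
  have rep := rep_lemma a b ω h_moments p hpdeg hp0 horth hdne ζ
  have hKdeg : (Kp a b ω ζ p n).natDegree ≤ n := by
    unfold Kp
    apply Polynomial.natDegree_sum_le_of_forall_le
    intro k hk
    refine le_trans (Polynomial.natDegree_C_mul_le _ _) ?_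
    rw [hpdeg]
    exact Nat.lt_succ_iff.mp (Finset.mem_range.mp hk)
  obtain ⟨c, hc⟩ := span_lemma P hPdeg hP0 n _ hKdeg
  have hcm : ∀ m, m < n → c m = 0 := by
    intro m hm
    have hdeg1 : ((X - Polynomial.C ζ) * P m).natDegree ≤ n := by
      refine le_trans Polynomial.natDegree_mul_le ?_
      rw [Polynomial.natDegree_X_sub_C, hPdeg]
      omega
    have h1 : LI a b ω (Kp a b ω ζ p n * ((X - Polynomial.C ζ) * P m)) = 0 := by
      rw [rep n _ hdeg1]
      simp
    have h2 : LI a b ω (Kp a b ω ζ p n * ((X - Polynomial.C ζ) * P m))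
        = c m * LI a b ω (P m ^ 2 * (X - Polynomial.C ζ)) := by
      rw [hc, Finset.sum_mul, LI_sum a b ω h_moments]
      rw [Finset.sum_eq_single m]
      · have ht : (Polynomial.C (c m) * P m) * ((X - Polynomial.C ζ) * P m)
            = Polynomial.C (c m) * (P m ^ 2 * (X - Polynomial.C ζ)) := by ring
        rw [ht, LI_C]
      · intro j hj hjm
        have ht : (Polynomial.C (c j) * P j) * ((X - Polynomial.C ζ) * P m)
            = Polynomial.C (c j) * (P j * P m * (X - Polynomial.C ζ)) := by ring
        rw [ht, LI_C, hPorth' j m hjm, mul_zero]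
      · intro hm'
        exact absurd (Finset.mem_range.mpr (by omega)) hm'
    rw [h1] at h2
    exact (mul_eq_zero.mp h2.symm).resolve_right (hPne' m)
  have hKP : Kp a b ω ζ p n = Polynomial.C (c n) * P n := by
    rw [hc, Finset.sum_range_succ]
    have hz : ∑ m ∈ Finset.range n, Polynomial.C (c m) * P m = 0 := by
      apply Finset.sum_eq_zero
      intro m hm
      rw [hcm m (Finset.mem_range.mp hm), map_zero, zero_mul]
    rw [hz, zero_add]
  have hstep : ∀ z : ℝ, c n * (P n).eval z = (P n).eval z := by
    intro z
    set Q : Polynomial ℝ := (P n).comp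
      ((X - Polynomial.C ζ) * Polynomial.C (τ + σ * z) + Polynomial.C z) with hQ
    have hinner : ((X - Polynomial.C ζ) * Polynomial.C (τ + σ * z)
        + Polynomial.C z).natDegree ≤ 1 := by
      refine le_trans (Polynomial.natDegree_add_le _ _) (max_le ?_ ?_)
      · refine le_trans Polynomial.natDegree_mul_le ?_
        rw [Polynomial.natDegree_X_sub_C, Polynomial.natDegree_C]
      · rw [Polynomial.natDegree_C]; omega
    have hQdeg : Q.natDegree ≤ n := by
      rw [hQ]
      refine le_trans Polynomial.natDegree_comp_le ?_
      refine le_trans (Nat.mul_le_mul_left _ hinner) ?_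
      rw [mul_one, hPdeg]
    have hA : LI a b ω (Kp a b ω ζ p n * Q) = (P n).eval z := by
      rw [rep n Q hQdeg, hQ, eval_comp]
      simp
    have hB : LI a b ω (Kp a b ω ζ p n * Q) = c n * (P n).eval z := by
      rw [hKP, mul_assoc, LI_C]
      congr 1
      have h1 := heq n z
      unfold LI
      rw [← h1]
      apply integral_congr_ae
      filter_upwards with y
      rw [hQ, eval_mul, eval_comp]
      simp
    rw [hA] at hB
    exact hB.symm
  have hcn : c n = 1 := by
    by_contra hne1
    apply hP0 n
    apply Polynomial.funext
    intro z
    have h2 : (c n - 1) * (P n).eval z = 0 := by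
      have := hstep z
      ring_nf
      linarith
    have hv := (mul_eq_zero.mp h2).resolve_left (sub_ne_zero.mpr hne1)
    simpa using hv
  have hfin : (P n).eval x = (Kp a b ω ζ p n).eval x := by
    rw [hKP, hcn]
    simp
  rw [hfin, hK]
  unfold Kp
  rw [eval_finset_sum]
  apply Finset.sum_congr rfl
  intro k _
  rw [eval_mul, eval_C]
  unfold LI
  simp only [eval_pow]
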